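/- Let R_n denote the rational number Σ_{b=0}^{2^n−1} (T^[n](b) − (3^{m(b,n)}/2^n)·b). Then for every n ≥ 1, R_{n+1} = 2^(n−1) + 2·R_n. -/

import Mathlib

def T (N : ℕ) : ℕ := if N % 2 = 0 then N / 2 else (3 * N + 1) / 2

def m (b n : ℕ) : ℕ := ((Finset.range n).filter (fun k => Odd (T^[k] b))).card

lemma m_succ (b n : ℕ) : m b (n+1) = m b n + (if Odd (T^[n] b) then 1 else 0) := by
  unfold m
  rw [Finset.range_add_one, Finset.filter_insert]
  split
  · rw [Finset.card_insert_of_notMem (by simp)]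
  · simp

lemma Tadd (a s : ℕ) : T (a + 2*s) = T a + (if Odd a then 3 else 1) * s := by
  unfold T
  simp only [Nat.odd_iff]
  rcases Nat.even_or_odd a with h | h
  · rw [Nat.even_iff] at h
    rw [if_pos (by omega), if_pos (by omega), if_neg (by omega)]
    omega
  · rw [Nat.odd_iff] at h
    rw [if_neg (by omega), if_neg (by omega), if_pos (by omega)]
    omega

lemma key (n : ℕ) : ∀ b t, T^[n] (b + 2^n * t) = T^[n] b + 3 ^ m b n * t
    ∧ m (b + 2^n * t) n = m b n := by
  induction n with
  | zero => intro b t; simp [m]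
  | succ n ih =>
    intro b t
    have e : b + 2^(n+1) * t = b + 2^n * (2*t) := by ring
    have h1 := ih b (2*t)
    have hT : T^[n] (b + 2^(n+1)*t) = T^[n] b + 2 * (3 ^ m b n * t) := by
      rw [e, h1.1]; ring
    have hpar : Odd (T^[n] (b + 2^(n+1)*t)) ↔ Odd (T^[n] b) := by
      rw [hT]; simp [Nat.odd_add, Nat.even_iff, Nat.mul_mod_right]
    constructor
    · rw [Function.iterate_succ_apply', Function.iterate_succ_apply', hT, Tadd, m_succ]
      split <;> ring
    · rw [m_succ, m_succ, e, h1.2]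
      congr 1
      rw [← e]
      simp [hpar]

lemma pair (n b : ℕ) :
    ((T^[n+1] b : ℚ) - (3 : ℚ) ^ m b (n+1) / 2 ^ (n+1) * b)
      + ((T^[n+1] (2^n + b) : ℚ) - (3 : ℚ) ^ m (2^n + b) (n+1) / 2 ^ (n+1) * (2^n + b))
    = 2 * ((T^[n] b : ℚ) - (3 : ℚ) ^ m b n / 2 ^ n * b) + 1/2 := by
  obtain ⟨d, hd⟩ : Odd (3 ^ m b n) := Odd.pow (by decide)
  have hb : 2^n + b = b + 2^n * 1 := by ring
  have hsh := key n b 1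
  have hTsh : T^[n] (2^n + b) = T^[n] b + 3 ^ m b n := by rw [hb, hsh.1]; ring
  have hmsh : m (2^n + b) n = m b n := by rw [hb, hsh.2]
  rw [Function.iterate_succ_apply', Function.iterate_succ_apply' T n (2^n + b),
    m_succ, m_succ, hTsh, hmsh]
  rcases Nat.even_or_odd (T^[n] b) with he | ho
  · obtain ⟨a, ha⟩ := he
    have ha' : T^[n] b = 2*a := by omega
    have e1 : T (T^[n] b) = a := by rw [ha']; unfold T; rw [if_pos (by omega)]; omega
    have e2 : T (T^[n] b + 3 ^ m b n) = 3*a + 3*d + 2 := by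
      rw [ha', hd]; unfold T; rw [if_neg (by omega)]; omega
    have hp1 : ¬ Odd (T^[n] b) := by rw [ha']; simp [Nat.odd_iff, Nat.mul_mod_right]
    have hp2 : Odd (T^[n] b + 3 ^ m b n) := by rw [ha', hd]; simp [Nat.odd_iff]
    rw [e1, e2, if_neg hp1, if_pos hp2, ha']
    have hdq : (3:ℚ) ^ m b n = 2*d + 1 := by exact_mod_cast hd
    push_cast
    simp only [add_zero, pow_succ, hdq]
    have h2 : (2:ℚ)^n ≠ 0 := by positivity
    field_simp
    ring
  · obtain ⟨a, ha'⟩ := ho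
    have e1 : T (T^[n] b) = 3*a + 2 := by rw [ha']; unfold T; rw [if_neg (by omega)]; omega
    have e2 : T (T^[n] b + 3 ^ m b n) = a + d + 1 := by
      rw [ha', hd]; unfold T; rw [if_pos (by omega)]; omega
    have hp1 : Odd (T^[n] b) := ⟨a, ha'⟩
    have hp2 : ¬ Odd (T^[n] b + 3 ^ m b n) := by rw [ha', hd]; simp [Nat.odd_iff]; omega
    rw [e1, e2, if_pos hp1, if_neg hp2, ha']
    have hdq : (3:ℚ) ^ m b n = 2*d + 1 := by exact_mod_cast hd
    push_cast
    simp only [add_zero, pow_succ, hdq]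
    have h2 : (2:ℚ)^n ≠ 0 := by positivity
    field_simp
    ring

theorem stmt9 : ∀ n ≥ 1,
    ∑ b ∈ Finset.range (2 ^ (n + 1)), ((T^[n + 1] b : ℚ) - (3 : ℚ) ^ m b (n + 1) / 2 ^ (n + 1) * b)
      = 2 ^ (n - 1) +
        2 * ∑ b ∈ Finset.range (2 ^ n), ((T^[n] b : ℚ) - (3 : ℚ) ^ m b n / 2 ^ n * b) := by
  intro n hn
  obtain ⟨k, rfl⟩ : ∃ k, n = k + 1 := ⟨n - 1, (Nat.succ_pred_eq_of_pos hn).symm⟩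
  set n := k + 1
  have h2 : 2^(n+1) = 2^n + 2^n := by ring
  rw [h2, Finset.sum_range_add, ← Finset.sum_add_distrib]
  have : ∑ b ∈ Finset.range (2^n),
      (((T^[n+1] b : ℚ) - (3 : ℚ) ^ m b (n+1) / 2 ^ (n+1) * b)
        + ((T^[n+1] (2^n + b) : ℚ) - (3 : ℚ) ^ m (2^n + b) (n+1) / 2 ^ (n+1) * ((2^n + b : ℕ) : ℚ)))
      = ∑ b ∈ Finset.range (2^n),
        (2 * ((T^[n] b : ℚ) - (3 : ℚ) ^ m b n / 2 ^ n * b) + 1/2) := by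
    refine Finset.sum_congr rfl fun b _ => ?_
    push_cast
    exact pair n b
  rw [this, Finset.sum_add_distrib, ← Finset.mul_sum, Finset.sum_const, Finset.card_range]
  have : n - 1 = k := by omega
  rw [this]
  have : ((2:ℚ)^n) = 2 * 2^k := by rw [pow_succ]; ring
  rw [nsmul_eq_mul]
  push_cast
  rw [this]
  ring
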